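/- Faà di Bruno's formula: for smooth functions f, g : ℝ → ℝ, the n-th derivative of the composition satisfies (f∘g)⁽ⁿ⁾(x) = ∑_{λ ⊢ n} n! · f⁽|λ|⁾(g(x)) · ∏_{(l with multiplicity k) ∈ λ} (g⁽ˡ⁾(x)/l!)ᵏ · (1/k!), where the sum is over partitions λ of n and |λ| is the number of parts. -/

import Mathlib

open Multiset Finset

namespace FaaAux

/-- weight of a multiset of parts -/
noncomputable def W (m : Multiset ℕ) : ℝ :=
  ∏ l ∈ m.toFinset, ((l.factorial : ℝ))⁻¹ ^ (m.count l) * ((m.count l).factorial : ℝ)⁻¹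

lemma W_cons (a : ℕ) (m : Multiset ℕ) :
    W (a ::ₘ m) = ((a.factorial : ℝ))⁻¹ * ((m.count a : ℝ) + 1)⁻¹ * W m := by
  unfold W
  rw [Multiset.toFinset_cons]
  by_cases h : a ∈ m
  · have ha : a ∈ m.toFinset := Multiset.mem_toFinset.2 h
    rw [Finset.insert_eq_self.2 ha]
    rw [← Finset.mul_prod_erase _ _ ha, ← Finset.mul_prod_erase _ _ ha]
    have hcong : ∀ l ∈ m.toFinset.erase a,
        ((l.factorial : ℝ))⁻¹ ^ ((a ::ₘ m).count l) * (((a ::ₘ m).count l).factorial : ℝ)⁻¹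
          = ((l.factorial : ℝ))⁻¹ ^ (m.count l) * ((m.count l).factorial : ℝ)⁻¹ := by
      intro l hl
      rw [Multiset.count_cons_of_ne (Finset.ne_of_mem_erase hl) ]
    rw [Finset.prod_congr rfl hcong]
    rw [Multiset.count_cons_self]
    rw [pow_succ, Nat.factorial_succ]
    push_cast
    rw [mul_inv]
    ring
  · have ha : a ∉ m.toFinset := fun hc => h (Multiset.mem_toFinset.1 hc)
    rw [Finset.prod_insert ha]
    have hcong : ∀ l ∈ m.toFinset,
        ((l.factorial : ℝ))⁻¹ ^ ((a ::ₘ m).count l) * (((a ::ₘ m).count l).factorial : ℝ)⁻¹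
          = ((l.factorial : ℝ))⁻¹ ^ (m.count l) * ((m.count l).factorial : ℝ)⁻¹ := by
      intro l hl
      have : l ≠ a := by rintro rfl; exact ha hl
      rw [Multiset.count_cons_of_ne this]
    rw [Finset.prod_congr rfl hcong]
    rw [Multiset.count_cons_self, Multiset.count_eq_zero_of_notMem h]
    norm_num

lemma prodPow_cons (d : ℕ → ℝ) (a : ℕ) (m : Multiset ℕ) :
    ∏ l ∈ (a ::ₘ m).toFinset, d l ^ ((a ::ₘ m).count l)
      = d a * ∏ l ∈ m.toFinset, d l ^ m.count l := by
  rw [← Finset.prod_multiset_map_count, ← Finset.prod_multiset_map_count,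
    Multiset.map_cons, Multiset.prod_cons]

lemma erase_prodPow (d : ℕ → ℝ) (a : ℕ) (m : Multiset ℕ) :
    d a ^ (m.count a - 1) * ∏ l ∈ m.toFinset.erase a, d l ^ m.count l
      = ∏ l ∈ (m.erase a).toFinset, d l ^ ((m.erase a).count l) := by
  have hsub : (m.erase a).toFinset ⊆ m.toFinset := by
    intro x hx
    exact Multiset.mem_toFinset.2 (Multiset.mem_of_mem_erase (Multiset.mem_toFinset.1 hx))
  rw [Finset.prod_subset hsub (by
    intro x hx hnx
    have : (m.erase a).count x = 0 := by
      rw [Multiset.count_eq_zero]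
      exact fun hc => hnx (Multiset.mem_toFinset.2 hc)
    rw [this, pow_zero])]
  by_cases h : a ∈ m
  · have ha : a ∈ m.toFinset := Multiset.mem_toFinset.2 h
    rw [← Finset.mul_prod_erase _ (fun l => d l ^ ((m.erase a).count l)) ha]
    rw [Multiset.count_erase_self]
    congr 1
    exact Finset.prod_congr rfl fun l hl => by
      rw [Multiset.count_erase_of_ne (Finset.ne_of_mem_erase hl)]
  · have h0 : m.count a = 0 := Multiset.count_eq_zero_of_notMem h
    rw [Multiset.erase_of_notMem h]
    have ha : a ∉ m.toFinset := fun hc => h (Multiset.mem_toFinset.1 hc)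
    rw [Finset.erase_eq_of_notMem ha, h0]
    norm_num

lemma sum_count_mul (m : Multiset ℕ) :
    ∑ j ∈ m.toFinset, j * m.count j = m.sum := by
  rw [Finset.sum_multiset_count m]
  exact Finset.sum_congr rfl fun j hj => by rw [smul_eq_mul, mul_comm]

lemma card_le_sum' (m : Multiset ℕ) (h : ∀ i ∈ m, 0 < i) : Multiset.card m ≤ m.sum := by
  induction m using Multiset.induction with
  | empty => simp
  | cons a s ih =>
    simp only [Multiset.card_cons, Multiset.sum_cons]
    have ha := h a (Multiset.mem_cons_self a s)
    have := ih fun i hi => h i (Multiset.mem_cons_of_mem hi)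
    omega


def junkP (n : ℕ) : Nat.Partition n :=
  ⟨Multiset.replicate n 1,
   fun {i} hi => by rw [Multiset.eq_of_mem_replicate hi]; norm_num,
   by simp [Multiset.sum_replicate]⟩

def cons1 {n : ℕ} (p : Nat.Partition n) : Nat.Partition (n + 1) :=
  ⟨1 ::ₘ p.parts,
   fun {i} hi => by
     rcases Multiset.mem_cons.1 hi with h | h
     · omega
     · exact p.parts_pos h,
   by rw [Multiset.sum_cons, p.parts_sum, add_comm]⟩

lemma cons1_parts {n : ℕ} (p : Nat.Partition n) : (cons1 p).parts = 1 ::ₘ p.parts := rfl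

def bump {n : ℕ} (p : Nat.Partition n) (l : ℕ) : Nat.Partition (n + 1) :=
  if h : l ∈ p.parts then
    ⟨(l + 1) ::ₘ p.parts.erase l,
     fun {i} hi => by
       rcases Multiset.mem_cons.1 hi with h' | h'
       · omega
       · exact p.parts_pos (Multiset.mem_of_mem_erase h'),
     by
       have hs : l + (p.parts.erase l).sum = n := by
         rw [← Multiset.sum_cons, Multiset.cons_erase h, p.parts_sum]
       rw [Multiset.sum_cons]; omega⟩
  else junkP (n + 1)

def unbump {n : ℕ} (q : Nat.Partition (n + 1)) (j : ℕ) : Nat.Partition n :=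
  if h : j ∈ q.parts ∧ 2 ≤ j then
    ⟨(j - 1) ::ₘ q.parts.erase j,
     fun {i} hi => by
       rcases Multiset.mem_cons.1 hi with h' | h'
       · omega
       · exact q.parts_pos (Multiset.mem_of_mem_erase h'),
     by
       have hs : j + (q.parts.erase j).sum = n + 1 := by
         rw [← Multiset.sum_cons, Multiset.cons_erase h.1, q.parts_sum]
       rw [Multiset.sum_cons]; omega⟩
  else if h1 : 1 ∈ q.parts then
    ⟨q.parts.erase 1,
     fun {i} hi => q.parts_pos (Multiset.mem_of_mem_erase hi),
     by
       have hs : 1 + (q.parts.erase 1).sum = n + 1 := by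
         rw [← Multiset.sum_cons, Multiset.cons_erase h1, q.parts_sum]
       omega⟩
  else junkP n

lemma bump_parts {n : ℕ} (p : Nat.Partition n) (l : ℕ) (h : l ∈ p.parts) :
    (bump p l).parts = (l + 1) ::ₘ p.parts.erase l := by
  rw [bump, dif_pos h]

lemma unbump_parts_one {n : ℕ} (q : Nat.Partition (n + 1)) (h1 : 1 ∈ q.parts) :
    (unbump q 1).parts = q.parts.erase 1 := by
  rw [unbump, dif_neg (by omega), dif_pos h1]

lemma unbump_parts_ge {n : ℕ} (q : Nat.Partition (n + 1)) (j : ℕ) (hj : j ∈ q.parts)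
    (h2 : 2 ≤ j) : (unbump q j).parts = (j - 1) ::ₘ q.parts.erase j := by
  rw [unbump, dif_pos ⟨hj, h2⟩]

set_option maxHeartbeats 2000000 in
theorem combinatorial (n : ℕ) (df dg : ℕ → ℝ) :
    ∑ p : Nat.Partition n, (n.factorial : ℝ) * W p.parts *
        ((df (p.parts.card + 1) * dg 1) * (∏ l ∈ p.parts.toFinset, dg l ^ p.parts.count l)
          + df p.parts.card * ∑ l ∈ p.parts.toFinset,
              (∏ l' ∈ p.parts.toFinset.erase l, dg l' ^ p.parts.count l') •
                ((p.parts.count l : ℝ) * dg l ^ (p.parts.count l - 1) * dg (l + 1)))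
      = ∑ q : Nat.Partition (n + 1), ((n + 1).factorial : ℝ) * W q.parts *
          (df q.parts.card * ∏ l ∈ q.parts.toFinset, dg l ^ q.parts.count l) := by
  classical
  -- the summand functions over sigma types
  set F : (Σ _ : Nat.Partition n, Option ℕ) → ℝ := fun z =>
    match z with
    | ⟨p, none⟩ => (n.factorial : ℝ) * W p.parts *
        ((df (p.parts.card + 1) * dg 1) * ∏ l ∈ p.parts.toFinset, dg l ^ p.parts.count l)
    | ⟨p, some l⟩ => (n.factorial : ℝ) * W p.parts *
        (df p.parts.card * ((∏ l' ∈ p.parts.toFinset.erase l, dg l' ^ p.parts.count l') *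
          ((p.parts.count l : ℝ) * dg l ^ (p.parts.count l - 1) * dg (l + 1)))) with hF
  set A : (Σ _ : Nat.Partition (n + 1), ℕ) → ℝ := fun w =>
    ((w.2 * w.1.parts.count w.2 : ℕ) : ℝ) * ((n : ℝ) + 1)⁻¹ *
      (((n + 1).factorial : ℝ) * W w.1.parts *
        (df w.1.parts.card * ∏ l ∈ w.1.parts.toFinset, dg l ^ w.1.parts.count l)) with hA
  have step1 : (∑ p : Nat.Partition n, (n.factorial : ℝ) * W p.parts *
        ((df (p.parts.card + 1) * dg 1) * (∏ l ∈ p.parts.toFinset, dg l ^ p.parts.count l)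
          + df p.parts.card * ∑ l ∈ p.parts.toFinset,
              (∏ l' ∈ p.parts.toFinset.erase l, dg l' ^ p.parts.count l') •
                ((p.parts.count l : ℝ) * dg l ^ (p.parts.count l - 1) * dg (l + 1))))
      = ∑ z ∈ (Finset.univ.sigma fun p : Nat.Partition n => insertNone p.parts.toFinset), F z := by
    rw [Finset.sum_sigma]
    refine Finset.sum_congr rfl fun p _ => ?_
    rw [show (∑ o ∈ insertNone p.parts.toFinset, F ⟨p, o⟩) = F ⟨p, none⟩ + ∑ l ∈ p.parts.toFinset, F ⟨p, some l⟩ from Finset.sum_insertNone (fun o => F ⟨p, o⟩) _]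
    simp only [hF, smul_eq_mul]
    rw [mul_add]
    congr 1
    rw [Finset.mul_sum, Finset.mul_sum]
  have step2 : (∑ q : Nat.Partition (n + 1), ((n + 1).factorial : ℝ) * W q.parts *
          (df q.parts.card * ∏ l ∈ q.parts.toFinset, dg l ^ q.parts.count l))
      = ∑ w ∈ (Finset.univ.sigma fun q : Nat.Partition (n + 1) => q.parts.toFinset), A w := by
    rw [Finset.sum_sigma]
    refine Finset.sum_congr rfl fun q _ => ?_
    simp only [hA]
    rw [← Finset.sum_mul, ← Finset.sum_mul, ← Nat.cast_sum, sum_count_mul, q.parts_sum]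
    have hne : ((n : ℝ) + 1) ≠ 0 := by positivity
    push_cast
    field_simp
  rw [step1, step2]
  refine Finset.sum_nbij'
    (i := fun z => match z with
      | ⟨p, none⟩ => ⟨cons1 p, 1⟩
      | ⟨p, some l⟩ => ⟨bump p l, l + 1⟩)
    (j := fun w => if 2 ≤ w.2 then ⟨unbump w.1 w.2, some (w.2 - 1)⟩ else ⟨unbump w.1 w.2, none⟩)
    ?_ ?_ ?_ ?_ ?_
  · -- hi : maps into target
    rintro ⟨p, _ | l⟩ hz
    all_goals dsimp only
    · simp only [Finset.mem_sigma, Finset.mem_univ, true_and]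
      rw [cons1_parts]
      exact Multiset.mem_toFinset.2 (Multiset.mem_cons_self 1 _)
    · have hl : l ∈ p.parts := by
        have := (Finset.mem_sigma.1 hz).2
        exact Multiset.mem_toFinset.1 (Finset.some_mem_insertNone.1 this)
      simp only [Finset.mem_sigma, Finset.mem_univ, true_and]
      rw [bump_parts p l hl]
      exact Multiset.mem_toFinset.2 (Multiset.mem_cons_self _ _)
  · -- hj : inverse maps into source
    rintro ⟨q, j⟩ hw
    dsimp only
    have hj : j ∈ q.parts := Multiset.mem_toFinset.1 (Finset.mem_sigma.1 hw).2
    have hj1 : 1 ≤ j := q.parts_pos hj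
    by_cases h2 : 2 ≤ j
    · simp only [if_pos h2, Finset.mem_sigma, Finset.mem_univ, true_and]
      rw [Finset.some_mem_insertNone, Multiset.mem_toFinset, unbump_parts_ge q j hj h2]
      exact Multiset.mem_cons_self _ _
    · simp only [if_neg h2, Finset.mem_sigma, Finset.mem_univ, true_and]
      exact Finset.none_mem_insertNone
  · -- left inverse
    rintro ⟨p, _ | l⟩ hz
    all_goals dsimp only
    · rw [if_neg (by omega)]
      have hp : unbump (cons1 p) 1 = p := by
        apply Nat.Partition.ext
        rw [unbump_parts_one _ (by rw [cons1_parts]; exact Multiset.mem_cons_self _ _),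
          cons1_parts, Multiset.erase_cons_head]
      rw [hp]
    · have hl : l ∈ p.parts := by
        have := (Finset.mem_sigma.1 hz).2
        exact Multiset.mem_toFinset.1 (Finset.some_mem_insertNone.1 this)
      have hl1 : 1 ≤ l := p.parts_pos hl
      rw [if_pos (by omega)]
      have hmem : l + 1 ∈ (bump p l).parts := by
        rw [bump_parts p l hl]; exact Multiset.mem_cons_self _ _
      have hp : unbump (bump p l) (l + 1) = p := by
        apply Nat.Partition.ext
        rw [unbump_parts_ge _ _ hmem (by omega), bump_parts p l hl,
          Multiset.erase_cons_head, Nat.add_sub_cancel, Multiset.cons_erase hl]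
      rw [hp, Nat.add_sub_cancel]
  · -- right inverse
    rintro ⟨q, j⟩ hw
    dsimp only
    have hj : j ∈ q.parts := Multiset.mem_toFinset.1 (Finset.mem_sigma.1 hw).2
    have hj1 : 1 ≤ j := q.parts_pos hj
    by_cases h2 : 2 ≤ j
    · rw [if_pos h2]
      simp only
      have hq : bump (unbump q j) (j - 1) = q := by
        apply Nat.Partition.ext
        have hmem : j - 1 ∈ (unbump q j).parts := by
          rw [unbump_parts_ge q j hj h2]; exact Multiset.mem_cons_self _ _
        rw [bump_parts _ _ hmem, unbump_parts_ge q j hj h2, Multiset.erase_cons_head]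
        rw [show j - 1 + 1 = j by omega, Multiset.cons_erase hj]
      rw [hq, show j - 1 + 1 = j by omega]
    · have hj' : j = 1 := by omega
      subst hj'
      rw [if_neg h2]
      simp only
      have hq : cons1 (unbump q 1) = q := by
        apply Nat.Partition.ext
        rw [cons1_parts, unbump_parts_one q hj, Multiset.cons_erase hj]
      rw [hq]
  · -- values agree
    rintro ⟨p, _ | l⟩ hz
    all_goals dsimp only
    · -- none case
      simp only [hF, hA, cons1_parts]
      rw [Multiset.card_cons, Multiset.count_cons_self, prodPow_cons, W_cons]
      have hne1 : ((p.parts.count 1 : ℝ) + 1) ≠ 0 := by positivity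
      have hne2 : ((n : ℝ) + 1) ≠ 0 := by positivity
      rw [Nat.factorial_succ, Nat.factorial_one]
      push_cast
      field_simp
    · -- some case
      have hl : l ∈ p.parts := by
        have := (Finset.mem_sigma.1 hz).2
        exact Multiset.mem_toFinset.1 (Finset.some_mem_insertNone.1 this)
      have hl1 : 1 ≤ l := p.parts_pos hl
      have hcnt : p.parts.count l = (p.parts.erase l).count l + 1 := by
        rw [Multiset.count_erase_self]
        have := Multiset.count_pos.2 hl
        omega
      have hcard : p.parts.card = (p.parts.erase l).card + 1 := by
        rw [Multiset.card_erase_of_mem hl, Nat.pred_eq_sub_one]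
        have : 0 < Multiset.card p.parts := Multiset.card_pos_iff_exists_mem.2 ⟨l, hl⟩
        omega
      have hW : W p.parts
          = ((l.factorial : ℝ))⁻¹ * (((p.parts.erase l).count l : ℝ) + 1)⁻¹ * W (p.parts.erase l) := by
        conv_lhs => rw [← Multiset.cons_erase hl]
        rw [W_cons]
      have hE := erase_prodPow dg l p.parts
      simp only [hF, hA]
      rw [bump_parts p l hl, Multiset.card_cons, Multiset.count_cons_self, prodPow_cons, W_cons]
      rw [hW, hcard, hcnt, Nat.add_sub_cancel] at *
      rw [Nat.factorial_succ n, Nat.factorial_succ l]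
      have ha : (((p.parts.erase l).count l : ℝ) + 1) ≠ 0 := by positivity
      have hb : (((p.parts.erase l).count (l + 1) : ℝ) + 1) ≠ 0 := by positivity
      have hnn : ((n : ℝ) + 1) ≠ 0 := by positivity
      have hlf : ((l.factorial : ℝ)) ≠ 0 := by positivity
      rw [← hE]
      push_cast
      field_simp


set_option maxHeartbeats 1000000 in
theorem key (f g : ℝ → ℝ) : ∀ n : ℕ, ContDiff ℝ n f → ContDiff ℝ n g → ∀ x : ℝ,
    iteratedDeriv n (f ∘ g) x =
      ∑ p : Nat.Partition n, (n.factorial : ℝ) * W p.parts *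
        (iteratedDeriv p.parts.card f (g x) *
          ∏ l ∈ p.parts.toFinset, (iteratedDeriv l g x) ^ (p.parts.count l)) := by
  intro n
  induction n with
  | zero =>
    intro hf hg x
    simp [iteratedDeriv_zero, W, Finset.sum_unique_nonempty, Function.comp]
  | succ n IH =>
    intro hf hg x
    have hle : ((n : ℕ∞) : WithTop ℕ∞) ≤ (((n+1 : ℕ) : ℕ∞) : WithTop ℕ∞) := by
      exact_mod_cast Nat.le_succ n
    have hf' : ContDiff ℝ n f := hf.of_le hle
    have hg' : ContDiff ℝ n g := hg.of_le hle
    rw [iteratedDeriv_succ, funext (IH hf' hg')]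
    have hcard : ∀ p : Nat.Partition n, p.parts.card ≤ n := by
      intro p
      have := card_le_sum' p.parts (fun _ hi => p.parts_pos hi)
      rwa [p.parts_sum] at this
    have hmem_le : ∀ p : Nat.Partition n, ∀ l ∈ p.parts, l ≤ n := by
      intro p l hl
      have := Multiset.single_le_sum (s := p.parts) (fun i _ => Nat.zero_le i) l hl
      rwa [p.parts_sum] at this
    have hgd : ∀ l : ℕ, l ≤ n → HasDerivAt (iteratedDeriv l g) (iteratedDeriv (l + 1) g x) x := by
      intro l hl
      have hdiff : Differentiable ℝ (iteratedDeriv l g) :=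
        hg.differentiable_iteratedDeriv l (by exact_mod_cast Nat.lt_succ_of_le hl)
      have h := (hdiff x).hasDerivAt
      rwa [← iteratedDeriv_succ] at h
    have hfd : ∀ m : ℕ, m ≤ n →
        HasDerivAt (iteratedDeriv m f) (iteratedDeriv (m + 1) f (g x)) (g x) := by
      intro m hm
      have hdiff : Differentiable ℝ (iteratedDeriv m f) :=
        hf.differentiable_iteratedDeriv m (by exact_mod_cast Nat.lt_succ_of_le hm)
      have h := (hdiff (g x)).hasDerivAt
      rwa [← iteratedDeriv_succ] at h
    have hg1 : HasDerivAt g (iteratedDeriv 1 g x) x := by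
      simpa [iteratedDeriv_zero] using hgd 0 (Nat.zero_le n)
    have hterm : ∀ p : Nat.Partition n,
        HasDerivAt
          (fun y => (n.factorial : ℝ) * W p.parts *
            (iteratedDeriv p.parts.card f (g y) *
              ∏ l ∈ p.parts.toFinset, (iteratedDeriv l g y) ^ (p.parts.count l)))
          ((n.factorial : ℝ) * W p.parts *
            ((iteratedDeriv (p.parts.card + 1) f (g x) * iteratedDeriv 1 g x) *
                (∏ l ∈ p.parts.toFinset, (iteratedDeriv l g x) ^ (p.parts.count l))
              + iteratedDeriv p.parts.card f (g x) *
                ∑ l ∈ p.parts.toFinset,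
                  (∏ l' ∈ p.parts.toFinset.erase l, (iteratedDeriv l' g x) ^ p.parts.count l') •
                    ((p.parts.count l : ℝ) * (iteratedDeriv l g x) ^ (p.parts.count l - 1) *
                      iteratedDeriv (l + 1) g x))) x := by
      intro p
      have h1 : HasDerivAt (fun y => iteratedDeriv p.parts.card f (g y))
          (iteratedDeriv (p.parts.card + 1) f (g x) * iteratedDeriv 1 g x) x :=
        (hfd _ (hcard p)).comp x hg1
      have h2 : HasDerivAt
          (fun y => ∏ l ∈ p.parts.toFinset, (iteratedDeriv l g y) ^ (p.parts.count l))
          (∑ l ∈ p.parts.toFinset,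
            (∏ l' ∈ p.parts.toFinset.erase l, (iteratedDeriv l' g x) ^ p.parts.count l') •
              ((p.parts.count l : ℝ) * (iteratedDeriv l g x) ^ (p.parts.count l - 1) *
                iteratedDeriv (l + 1) g x)) x := by
        apply HasDerivAt.fun_finsetProd
        intro l hl
        exact (hgd l (hmem_le p l (Multiset.mem_toFinset.1 hl))).fun_pow _
      exact (h1.mul h2).const_mul _
    have hsum := HasDerivAt.fun_sum (u := Finset.univ) (fun p _ => hterm p)
    rw [hsum.deriv]
    exact combinatorial n (fun m => iteratedDeriv m f (g x)) (fun l => iteratedDeriv l g x)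


end FaaAux

/-- Faà di Bruno's formula: the `n`-th derivative of a composition as a sum over
partitions `λ` of `n`, where `|λ| = λ.parts.card` is the number of parts and
`λ.parts.count l` is the multiplicity of the part `l`. -/
theorem faa_di_bruno (n : ℕ) (f g : ℝ → ℝ) (x : ℝ)
    (hf : ContDiff ℝ n f) (hg : ContDiff ℝ n g) :
    iteratedDeriv n (f ∘ g) x =
      ∑ p : Nat.Partition n,
        (n.factorial : ℝ) * iteratedDeriv p.parts.card f (g x) *
          ∏ l ∈ p.parts.toFinset,
            (iteratedDeriv l g x / l.factorial) ^ (p.parts.count l) *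
              (1 / (p.parts.count l).factorial) := by
  rw [FaaAux.key f g n hf hg x]
  refine Finset.sum_congr rfl fun p _ => ?_
  have h : (∏ l ∈ p.parts.toFinset,
        (iteratedDeriv l g x / l.factorial) ^ (p.parts.count l) *
          (1 / (p.parts.count l).factorial))
      = FaaAux.W p.parts * ∏ l ∈ p.parts.toFinset, (iteratedDeriv l g x) ^ (p.parts.count l) := by
    rw [FaaAux.W, ← Finset.prod_mul_distrib]
    refine Finset.prod_congr rfl fun l _ => ?_
    rw [div_pow, one_div, div_eq_mul_inv, ← inv_pow]
    ring
  rw [h]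
  ring
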